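/- Fix n ≥ 1 and 0 ≤ m ≤ n. Let S⁺ := {z ∈ ℂ : Re z ≥ 0, 0 ≤ Im z ≤ 1} and let u : S⁺ → ℂⁿ be a continuous map that is holomorphic on the interior {Re z > 0, 0 < Im z < 1}, satisfies the boundary conditions u({Im z = 0}) ⊆ Λ₀ and u({Im z = 1}) ⊆ Λ₁, has finite energy ∫ ‖u′‖² dλ < ∞ over the interior, and converges uniformly to a point: there is p ∈ ℂⁿ with sup_{t ∈ [0,1]} ‖u(s + it) − p‖ → 0 as s → ∞. Then there are constants c > 0 and γ > 0 such that ‖u(s + it) − p‖ ≤ c·e^{−γs} for all s ≥ 0 and t ∈ [0,1]. -/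

import Mathlib

open MeasureTheory

open Complex Set intervalIntegral Metric
open scoped Interval Real

namespace Complex

noncomputable def abs : AbsoluteValue ℂ ℝ := IsAbsoluteValue.toAbsoluteValue (norm : ℂ → ℝ)

@[simp] lemma abs_apply_norm (z : ℂ) : Complex.abs z = ‖z‖ := rfl

lemma norm_eq_abs (z : ℂ) : ‖z‖ = Complex.abs z := rfl

lemma abs_ofReal (r : ℝ) : Complex.abs (r : ℂ) = |r| := by simp

lemma abs_I : Complex.abs I = 1 := by simp

lemma abs_conj (z : ℂ) : Complex.abs ((starRingEnd ℂ) z) = Complex.abs z := by simp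

lemma abs_re_le_abs (z : ℂ) : |z.re| ≤ Complex.abs z := by simpa using Complex.abs_re_le_norm z

lemma abs_im_le_abs (z : ℂ) : |z.im| ≤ Complex.abs z := by simpa using Complex.abs_im_le_norm z

lemma abs_exp (z : ℂ) : Complex.abs (Complex.exp z) = Real.exp z.re := by simp [Complex.norm_exp]

lemma abs_le_abs_re_add_abs_im (z : ℂ) : Complex.abs z ≤ |z.re| + |z.im| := by
  simpa using Complex.norm_le_abs_re_add_abs_im z

end Complex

noncomputable def RectSum (f : ℂ → ℂ) (x₁ x₂ y₁ y₂ : ℝ) : ℂ :=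
  (∫ x : ℝ in x₁..x₂, f (x + y₁ * I)) - (∫ x : ℝ in x₁..x₂, f (x + y₂ * I)) +
    I • (∫ y : ℝ in y₁..y₂, f (x₂ + y * I)) - I • ∫ y : ℝ in y₁..y₂, f (x₁ + y * I)

/-- restated mathlib Cauchy-Goursat for rectangles in terms of RectSum -/
lemma rectSum_eq_zero {f : ℂ → ℂ} {x₁ x₂ y₁ y₂ : ℝ}
    (Hc : ContinuousOn f ([[x₁, x₂]] ×ℂ [[y₁, y₂]]))
    (Hd : DifferentiableOn ℂ f (Ioo (min x₁ x₂) (max x₁ x₂) ×ℂ Ioo (min y₁ y₂) (max y₁ y₂))) :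
    RectSum f x₁ x₂ y₁ y₂ = 0 := by
  have := integral_boundary_rect_eq_zero_of_continuousOn_of_differentiableOn f
    (x₁ + y₁ * I) (x₂ + y₂ * I) (by simpa using Hc) (by simpa using Hd)
  simpa [RectSum] using this

lemma rectSum_add_y {f : ℂ → ℂ} {x₁ x₂ y₁ m y₂ : ℝ}
    (h₁ : IntervalIntegrable (fun y : ℝ => f (x₁ + y * I)) MeasureTheory.volume y₁ m)
    (h₂ : IntervalIntegrable (fun y : ℝ => f (x₁ + y * I)) MeasureTheory.volume m y₂)
    (h₃ : IntervalIntegrable (fun y : ℝ => f (x₂ + y * I)) MeasureTheory.volume y₁ m)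
    (h₄ : IntervalIntegrable (fun y : ℝ => f (x₂ + y * I)) MeasureTheory.volume m y₂) :
    RectSum f x₁ x₂ y₁ y₂ = RectSum f x₁ x₂ y₁ m + RectSum f x₁ x₂ m y₂ := by
  unfold RectSum
  rw [← intervalIntegral.integral_add_adjacent_intervals h₁ h₂,
    ← intervalIntegral.integral_add_adjacent_intervals h₃ h₄]
  simp only [smul_eq_mul]
  ring

lemma moreraAt {f : ℂ → ℂ} {c : ℂ} {r : ℝ} (hr : 0 < r)
    (hc : ContinuousOn f (Ioo (c.re - r) (c.re + r) ×ℂ Ioo (c.im - r) (c.im + r)))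
    (hrect : ∀ x₁ x₂ y₁ y₂ : ℝ, x₁ ∈ Ioo (c.re - r) (c.re + r) → x₂ ∈ Ioo (c.re - r) (c.re + r) →
      y₁ ∈ Ioo (c.im - r) (c.im + r) → y₂ ∈ Ioo (c.im - r) (c.im + r) →
      RectSum f x₁ x₂ y₁ y₂ = 0) :
    DifferentiableAt ℂ f c := by
  set Ix : Set ℝ := Ioo (c.re - r) (c.re + r) with hIx
  set Iy : Set ℝ := Ioo (c.im - r) (c.im + r) with hIy
  set Q : Set ℂ := Ix ×ℂ Iy with hQdef
  have hQ : IsOpen Q := isOpen_Ioo.reProdIm isOpen_Ioo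
  have hmem : ∀ {a b : ℝ}, a ∈ Ix → b ∈ Iy → (a : ℂ) + b * I ∈ Q := by
    intro a b ha hb
    simp [hQdef, Complex.mem_reProdIm, ha, hb]
  -- vertical segments integrable
  have hvert : ∀ a ∈ Ix, ∀ y₁ ∈ Iy, ∀ y₂ ∈ Iy,
      IntervalIntegrable (fun y : ℝ => f (a + y * I)) MeasureTheory.volume y₁ y₂ := by
    intro a ha y₁ h₁ y₂ h₂
    apply ContinuousOn.intervalIntegrable
    apply hc.comp (Continuous.continuousOn
      (continuous_const.add ((Complex.continuous_ofReal).mul continuous_const)))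
    intro y hy
    exact hmem ha (Set.ordConnected_Ioo.uIcc_subset h₁ h₂ hy)
  have hhoriz : ∀ b ∈ Iy, ∀ x₁ ∈ Ix, ∀ x₂ ∈ Ix,
      IntervalIntegrable (fun x : ℝ => f (x + b * I)) MeasureTheory.volume x₁ x₂ := by
    intro b hb x₁ h₁ x₂ h₂
    apply ContinuousOn.intervalIntegrable
    apply hc.comp (Continuous.continuousOn
      ((Complex.continuous_ofReal).add continuous_const))
    intro x hx
    exact hmem (Set.ordConnected_Ioo.uIcc_subset h₁ h₂ hx) hb
  have hxc : c.re ∈ Ix := by constructor <;> [linarith; linarith]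
  have hyc : c.im ∈ Iy := by constructor <;> [linarith; linarith]
  have hcmem : c ∈ Q := by
    have := hmem hxc hyc
    rwa [Complex.re_add_im] at this
  have hreQ : ∀ z ∈ Q, z.re ∈ Ix := fun z hz => hz.1
  have himQ : ∀ z ∈ Q, z.im ∈ Iy := fun z hz => hz.2
  set F : ℂ → ℂ := fun z =>
    (∫ x : ℝ in c.re..z.re, f (x + c.im * I)) + I • ∫ y : ℝ in c.im..z.im, f (z.re + y * I)
    with hF
  have key : ∀ z ∈ Q, HasDerivAt F (f z) z := by
    intro z hz
    rw [hasDerivAt_iff_isLittleO]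
    rw [Asymptotics.isLittleO_iff]
    intro ε hε
    have hcf : ContinuousAt f z := hc.continuousAt (hQ.mem_nhds hz)
    rcases Metric.continuousAt_iff.1 hcf (ε/2) (half_pos hε) with ⟨δ, hδ, hδf⟩
    have hev : ∀ᶠ z' in nhds z, z' ∈ Q ∧ dist z' z < δ/2 :=
      (hQ.eventually_mem hz).and (Metric.ball_mem_nhds z (by positivity))
    filter_upwards [hev] with z' ⟨hz', hdz⟩
    -- the difference formula
    have hrectz : RectSum f z.re z'.re c.im z.im = 0 :=
      hrect _ _ _ _ (hreQ z hz) (hreQ z' hz') hyc (himQ z hz)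
    have hsplit : (∫ x : ℝ in c.re..z'.re, f (x + c.im * I)) -
        (∫ x : ℝ in c.re..z.re, f (x + c.im * I)) = ∫ x : ℝ in z.re..z'.re, f (x + c.im * I) :=
      intervalIntegral.integral_interval_sub_left
        (hhoriz _ hyc _ hxc _ (hreQ z' hz')) (hhoriz _ hyc _ hxc _ (hreQ z hz))
    have hsplit2 : (∫ y : ℝ in c.im..z'.im, f (z'.re + y * I)) -
        (∫ y : ℝ in c.im..z.im, f (z'.re + y * I)) = ∫ y : ℝ in z.im..z'.im, f (z'.re + y * I) :=
      intervalIntegral.integral_interval_sub_left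
        (hvert _ (hreQ z' hz') _ hyc _ (himQ z' hz')) (hvert _ (hreQ z' hz') _ hyc _ (himQ z hz))
    have hdiff : F z' - F z =
        (∫ x : ℝ in z.re..z'.re, f (x + z.im * I)) +
          I • ∫ y : ℝ in z.im..z'.im, f (z'.re + y * I) := by
      have h3 : (∫ x : ℝ in z.re..z'.re, f (x + c.im * I)) -
          (∫ x : ℝ in z.re..z'.re, f (x + z.im * I)) +
          I * (∫ y : ℝ in c.im..z.im, f (z'.re + y * I)) -
          I * (∫ y : ℝ in c.im..z.im, f (z.re + y * I)) = 0 := by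
        simpa [RectSum, smul_eq_mul] using hrectz
      simp only [hF, smul_eq_mul]
      linear_combination hsplit + I * hsplit2 + h3
    have hbound1 : ‖(∫ x : ℝ in z.re..z'.re, f (x + z.im * I)) - (z'.re - z.re : ℝ) • f z‖ ≤
        ε/2 * |z'.re - z.re| := by
      have : (∫ x : ℝ in z.re..z'.re, f (x + z.im * I)) - (z'.re - z.re : ℝ) • f z =
          ∫ x : ℝ in z.re..z'.re, (f (x + z.im * I) - f z) := by
        rw [intervalIntegral.integral_sub (hhoriz _ (himQ z hz) _ (hreQ z hz) _ (hreQ z' hz'))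
          intervalIntegrable_const, intervalIntegral.integral_const]
      rw [this]
      apply intervalIntegral.norm_integral_le_of_norm_le_const
      intro x hx
      have hxm : |x - z.re| ≤ |z'.re - z.re| := by
        rcases Set.mem_uIoc.1 hx with h | h
        · rw [_root_.abs_of_nonneg (by linarith [h.1]), _root_.abs_of_nonneg (by linarith [h.1, h.2])]
          linarith [h.2]
        · rw [_root_.abs_of_nonpos (by linarith [h.2]), _root_.abs_of_nonpos (by linarith [h.1, h.2])]
          linarith [h.1]
      have hd : dist ((x : ℂ) + z.im * I) z < δ := by
        have : dist ((x : ℂ) + z.im * I) z = |x - z.re| := by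
          rw [Complex.dist_eq]
          have : (x : ℂ) + z.im * I - z = ((x - z.re : ℝ) : ℂ) := by
            apply Complex.ext <;> simp
          rw [this]; exact Complex.abs_ofReal _
        rw [this]
        calc |x - z.re| ≤ |z'.re - z.re| := hxm
          _ ≤ Complex.abs (z' - z) := by
              simpa using Complex.abs_re_le_abs (z' - z)
          _ < δ := by
              rw [Complex.abs_apply_norm, ← Complex.dist_eq]
              calc dist z' z < δ/2 := hdz
                _ ≤ δ := by linarith
      exact le_of_lt (by simpa [dist_eq_norm] using hδf hd)
    have hbound2 : ‖(∫ y : ℝ in z.im..z'.im, f (z'.re + y * I)) - (z'.im - z.im : ℝ) • f z‖ ≤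
        ε/2 * |z'.im - z.im| := by
      have : (∫ y : ℝ in z.im..z'.im, f (z'.re + y * I)) - (z'.im - z.im : ℝ) • f z =
          ∫ y : ℝ in z.im..z'.im, (f (z'.re + y * I) - f z) := by
        rw [intervalIntegral.integral_sub (hvert _ (hreQ z' hz') _ (himQ z hz) _ (himQ z' hz'))
          intervalIntegrable_const, intervalIntegral.integral_const]
      rw [this]
      apply intervalIntegral.norm_integral_le_of_norm_le_const
      intro y hy
      have hym : |y - z.im| ≤ |z'.im - z.im| := by
        rcases Set.mem_uIoc.1 hy with h | h
        · rw [_root_.abs_of_nonneg (by linarith [h.1]), _root_.abs_of_nonneg (by linarith [h.1, h.2])]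
          linarith [h.2]
        · rw [_root_.abs_of_nonpos (by linarith [h.2]), _root_.abs_of_nonpos (by linarith [h.1, h.2])]
          linarith [h.1]
      have hd : dist ((z'.re : ℂ) + y * I) z < δ := by
        have he : dist ((z'.re : ℂ) + y * I) z ≤ |z'.re - z.re| + |y - z.im| := by
          rw [Complex.dist_eq]
          have : (z'.re : ℂ) + y * I - z = ((z'.re - z.re : ℝ) : ℂ) + ((y - z.im : ℝ) : ℂ) * I := by
            apply Complex.ext <;> simp
          rw [this]
          calc Complex.abs (((z'.re - z.re : ℝ) : ℂ) + ((y - z.im : ℝ) : ℂ) * I) ≤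
              Complex.abs ((z'.re - z.re : ℝ) : ℂ) + Complex.abs (((y - z.im : ℝ) : ℂ) * I) :=
                Complex.abs.add_le _ _
            _ = |z'.re - z.re| + |y - z.im| := by
                rw [map_mul, Complex.abs_I, mul_one, Complex.abs_ofReal, Complex.abs_ofReal]
        have h1 : |z'.re - z.re| ≤ dist z' z := by
          rw [Complex.dist_eq]; simpa using Complex.abs_re_le_abs (z' - z)
        have h2 : |y - z.im| ≤ |z'.im - z.im| := hym
        have h3 : |z'.im - z.im| ≤ dist z' z := by
          rw [Complex.dist_eq]; simpa using Complex.abs_im_le_abs (z' - z)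
        calc dist ((z'.re : ℂ) + y * I) z ≤ |z'.re - z.re| + |y - z.im| := he
          _ ≤ dist z' z + dist z' z := by linarith
          _ < δ := by linarith
      exact le_of_lt (by simpa [dist_eq_norm] using hδf hd)
    -- combine
    have hsum : F z' - F z - (z' - z) • f z =
        ((∫ x : ℝ in z.re..z'.re, f (x + z.im * I)) - (z'.re - z.re : ℝ) • f z) +
          I • ((∫ y : ℝ in z.im..z'.im, f (z'.re + y * I)) - (z'.im - z.im : ℝ) • f z) := by
      rw [hdiff]
      simp only [smul_eq_mul, Complex.real_smul]
      have hz'z : (z' - z : ℂ) = ((z'.re - z.re : ℝ) : ℂ) + ((z'.im - z.im : ℝ) : ℂ) * I := by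
        apply Complex.ext <;> simp
      rw [hz'z]
      ring
    rw [hsum]
    calc ‖((∫ x : ℝ in z.re..z'.re, f (x + z.im * I)) - (z'.re - z.re : ℝ) • f z) +
          I • ((∫ y : ℝ in z.im..z'.im, f (z'.re + y * I)) - (z'.im - z.im : ℝ) • f z)‖ ≤
        ‖(∫ x : ℝ in z.re..z'.re, f (x + z.im * I)) - (z'.re - z.re : ℝ) • f z‖ +
          ‖(∫ y : ℝ in z.im..z'.im, f (z'.re + y * I)) - (z'.im - z.im : ℝ) • f z‖ := by
          refine (norm_add_le _ _).trans ?_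
          gcongr
          simp [norm_smul]
      _ ≤ ε/2 * |z'.re - z.re| + ε/2 * |z'.im - z.im| := by gcongr
      _ ≤ ε/2 * ‖z' - z‖ + ε/2 * ‖z' - z‖ := by
          have h1 : |z'.re - z.re| ≤ ‖z' - z‖ := by simpa using Complex.abs_re_le_abs (z' - z)
          have h2 : |z'.im - z.im| ≤ ‖z' - z‖ := by simpa using Complex.abs_im_le_abs (z' - z)
          gcongr <;> linarith [hε.le]
      _ = ε * ‖z' - z‖ := by ring
  -- conclude
  have hFd : DifferentiableOn ℂ F Q := fun z hz => (key z hz).differentiableAt.differentiableWithinAt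
  have hFa : AnalyticOnNhd ℂ F Q := hFd.analyticOnNhd hQ
  have hda : AnalyticOnNhd ℂ (deriv F) Q := hFa.deriv
  have heq : ∀ᶠ z in nhds c, deriv F z = f z := by
    filter_upwards [hQ.eventually_mem hcmem] with z hz
    exact (key z hz).deriv
  exact (Filter.EventuallyEq.differentiableAt_iff heq).1 ((hda c hcmem).differentiableAt)

/-- derivative of the double-conjugate of a holomorphic function -/
lemma hasDerivAt_conj_conj {f : ℂ → ℂ} {z d : ℂ}
    (hf : HasDerivAt f d ((starRingEnd ℂ) z)) :
    HasDerivAt (fun w => (starRingEnd ℂ) (f ((starRingEnd ℂ) w))) ((starRingEnd ℂ) d) z := by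
  rw [hasDerivAt_iff_tendsto_slope] at hf ⊢
  have hmap : Filter.Tendsto (fun w => (starRingEnd ℂ) w) (nhdsWithin z {z}ᶜ)
      (nhdsWithin ((starRingEnd ℂ) z) {(starRingEnd ℂ) z}ᶜ) := by
    refine tendsto_nhdsWithin_iff.2 ⟨(Complex.continuous_conj.tendsto z).mono_left
      nhdsWithin_le_nhds, ?_⟩
    filter_upwards [self_mem_nhdsWithin] with w hw
    simp only [Set.mem_compl_iff, Set.mem_singleton_iff] at hw ⊢
    exact fun h => hw ((starRingEnd ℂ).injective h)
  have h1 : Filter.Tendsto (fun w => (starRingEnd ℂ)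
      (slope f ((starRingEnd ℂ) z) ((starRingEnd ℂ) w))) (nhdsWithin z {z}ᶜ)
      (nhds ((starRingEnd ℂ) d)) :=
    (Complex.continuous_conj.tendsto d).comp (hf.comp hmap)
  refine h1.congr fun w => ?_
  simp only [slope_def_field, map_div₀, map_sub, Complex.conj_conj]

lemma strip_decay (f : ℂ → ℂ)
    (hfc : ContinuousOn f {z : ℂ | 0 ≤ z.re ∧ 0 ≤ z.im ∧ z.im ≤ 1})
    (hfd : ∀ z : ℂ, 0 < z.re → 0 < z.im → z.im < 1 → DifferentiableAt ℂ f z)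
    (hre0 : ∀ x : ℝ, 0 ≤ x → (f (x : ℂ)).im = 0)
    (hre1 : ∀ x : ℝ, 0 ≤ x → (f ((x : ℂ) + I)).im = 0)
    (hlim : ∀ ε > (0:ℝ), ∃ s₀ : ℝ, ∀ s ≥ s₀, ∀ t ∈ Set.Icc (0:ℝ) 1,
      Complex.abs (f ((s:ℂ) + (t:ℂ) * I)) ≤ ε) :
    ∃ c > (0:ℝ), ∀ s ≥ (0:ℝ), ∀ t ∈ Set.Icc (0:ℝ) 1,
      Complex.abs (f ((s:ℂ) + (t:ℂ) * I)) ≤ c * Real.exp (-Real.pi * s) := by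
  set S : Set ℂ := {z : ℂ | 0 ≤ z.re ∧ 0 ≤ z.im ∧ z.im ≤ 1} with hS
  have hmemS : ∀ z : ℂ, 0 ≤ z.re → 0 ≤ z.im → z.im ≤ 1 → z ∈ S := fun z h1 h2 h3 => ⟨h1, h2, h3⟩
  -- global bound M on |f| over S
  obtain ⟨M, hM1, hM⟩ : ∃ M : ℝ, 1 ≤ M ∧ ∀ z ∈ S, Complex.abs (f z) ≤ M := by
    obtain ⟨s₀, hs₀⟩ := hlim 1 one_pos
    set s₁ : ℝ := max s₀ 0 with hs₁
    have hK : IsCompact ((fun p : ℝ × ℝ => (p.1 : ℂ) + (p.2 : ℂ) * I) '' (Icc 0 s₁ ×ˢ Icc 0 1)) :=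
      (isCompact_Icc.prod isCompact_Icc).image (by
        exact (Complex.continuous_ofReal.comp continuous_fst).add
          ((Complex.continuous_ofReal.comp continuous_snd).mul continuous_const))
    have hKS : ((fun p : ℝ × ℝ => (p.1 : ℂ) + (p.2 : ℂ) * I) '' (Icc 0 s₁ ×ˢ Icc 0 1)) ⊆ S := by
      rintro z ⟨⟨a, b⟩, ⟨ha, hb⟩, rfl⟩
      exact hmemS _ (by simp [ha.1]) (by simp [hb.1]) (by simp [hb.2])
    obtain ⟨M₀, hM₀⟩ := hK.exists_bound_of_continuousOn (hfc.mono hKS)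
    refine ⟨max M₀ 1, le_max_right _ _, fun z hz => ?_⟩
    rcases le_or_gt z.re s₁ with h | h
    · have : z ∈ (fun p : ℝ × ℝ => (p.1 : ℂ) + (p.2 : ℂ) * I) '' (Icc 0 s₁ ×ˢ Icc 0 1) :=
        ⟨(z.re, z.im), ⟨⟨hz.1, h⟩, ⟨hz.2.1, hz.2.2⟩⟩, by simp [Complex.re_add_im]⟩
      calc Complex.abs (f z) = ‖f z‖ := rfl
        _ ≤ M₀ := hM₀ z this
        _ ≤ max M₀ 1 := le_max_left _ _
    · have := hs₀ z.re (le_trans (le_max_left _ _) h.le) z.im ⟨hz.2.1, hz.2.2⟩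
      rw [Complex.re_add_im] at this
      exact le_trans this (le_max_right _ _)
  have hMpos : (0:ℝ) < M := lt_of_lt_of_le one_pos hM1
  -- the map from the disk to the strip
  set zm : ℂ → ℂ := fun w => -(Complex.log w) / (Real.pi : ℂ) with hzm
  have hπ : (0:ℝ) < Real.pi := Real.pi_pos
  have hπC : (Real.pi : ℂ) ≠ 0 := Complex.ofReal_ne_zero.2 hπ.ne'
  have hzm_re : ∀ w : ℂ, (zm w).re = -Real.log (Complex.abs w) / Real.pi := by
    intro w
    rw [hzm]
    simp [Complex.div_ofReal_re, Complex.neg_re, Complex.log_re]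
  have hzm_im : ∀ w : ℂ, (zm w).im = -(Complex.arg w) / Real.pi := by
    intro w
    rw [hzm]
    simp [Complex.div_ofReal_im, Complex.neg_im, Complex.log_im]
  have hre_pos : ∀ w : ℂ, Complex.abs w < 1 → 0 < Complex.abs w → 0 < (zm w).re := by
    intro w h1 h0
    rw [hzm_re]
    have h2 := Real.log_neg h0 h1
    have : 0 < -Real.log (Complex.abs w) := by linarith
    positivity
  -- membership facts
  have hlow : ∀ w : ℂ, Complex.abs w < 1 → w.im < 0 → zm w ∈ S ∧ 0 < (zm w).re ∧
      0 < (zm w).im ∧ (zm w).im < 1 := by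
    intro w h1 h2
    have h0 : 0 < Complex.abs w := by
      refine Complex.abs.pos fun hw => ?_
      rw [hw] at h2; simp at h2
    have hre := hre_pos w h1 h0
    have harg1 : Complex.arg w < 0 := Complex.arg_neg_iff.2 h2
    have harg2 : -Real.pi < Complex.arg w := Complex.neg_pi_lt_arg w
    have him1 : 0 < (zm w).im := by
      rw [hzm_im]
      have : 0 < -Complex.arg w := by linarith
      positivity
    have him2 : (zm w).im < 1 := by
      rw [hzm_im, div_lt_one hπ]; linarith
    exact ⟨hmemS _ hre.le him1.le him2.le, hre, him1, him2⟩
  have hupp : ∀ w : ℂ, w ≠ 0 → Complex.abs w < 1 → 0 ≤ w.im →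
      (starRingEnd ℂ) (zm w) ∈ S ∧ 0 < ((starRingEnd ℂ) (zm w)).re := by
    intro w h0 h1 h2
    have habs : 0 < Complex.abs w := Complex.abs.pos h0
    have hre := hre_pos w h1 habs
    have harg1 : 0 ≤ Complex.arg w := Complex.arg_nonneg_iff.2 h2
    have harg2 : Complex.arg w ≤ Real.pi := Complex.arg_le_pi w
    have hre' : ((starRingEnd ℂ) (zm w)).re = (zm w).re := by simp
    have him' : ((starRingEnd ℂ) (zm w)).im = Complex.arg w / Real.pi := by
      simp [hzm_im]; ring
    refine ⟨hmemS _ (by rw [hre']; exact hre.le) ?_ ?_, by rw [hre']; exact hre⟩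
    · rw [him']; positivity
    · rw [him', div_le_one hπ]; exact harg2
  -- the reflected disk function
  set g : ℂ → ℂ := fun w => if w = 0 then 0 else if w.im < 0 then f (zm w)
    else (starRingEnd ℂ) (f ((starRingEnd ℂ) (zm w))) with hg
  have hg0 : g 0 = 0 := by rw [hg]; simp
  have hgl : ∀ w : ℂ, w ≠ 0 → w.im < 0 → g w = f (zm w) := by
    intro w h0 h1; rw [hg]; simp [h0, h1]
  have hgu : ∀ w : ℂ, w ≠ 0 → 0 ≤ w.im → g w = (starRingEnd ℂ) (f ((starRingEnd ℂ) (zm w))) := by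
    intro w h0 h1; rw [hg]; simp [h0, not_lt.2 h1]
  -- bound on g
  have hgb : ∀ w : ℂ, Complex.abs w < 1 → Complex.abs (g w) ≤ M := by
    intro w h1
    rcases eq_or_ne w 0 with rfl | h0
    · rw [hg0]; simpa using hMpos.le
    rcases lt_or_ge w.im 0 with h2 | h2
    · rw [hgl w h0 h2]
      exact hM _ (hlow w h1 h2).1
    · rw [hgu w h0 h2]
      rw [Complex.abs_conj]
      exact hM _ (hupp w h0 h1 h2).1
  set D : Set ℂ := ball (0:ℂ) 1 \ {0} with hD
  have hDmem : ∀ {w : ℂ}, w ∈ D ↔ Complex.abs w < 1 ∧ w ≠ 0 := by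
    intro w
    rw [hD]
    simp [Metric.mem_ball, Complex.dist_eq]
  have hzm_contAt : ∀ w : ℂ, w ∈ Complex.slitPlane → ContinuousAt zm w := by
    intro w hw
    exact ((continuousAt_clog hw).neg).div_const _
  have hzm_diffAt : ∀ w : ℂ, w ∈ Complex.slitPlane → DifferentiableAt ℂ zm w := by
    intro w hw
    exact ((Complex.differentiableAt_log hw).neg).div_const _
  -- continuity of g away from the reals (gives full ContinuousAt)
  have hcontA : ∀ w₀ : ℂ, w₀ ∈ D → w₀.im ≠ 0 → ContinuousAt g w₀ := by
    intro w₀ hw₀ him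
    obtain ⟨habs, hne⟩ := hDmem.1 hw₀
    rcases him.lt_or_gt with hlt | hgt
    · -- lower half
      have hz := hlow w₀ habs hlt
      have hca : ContinuousAt (fun w => f (zm w)) w₀ :=
        ((hfd _ hz.2.1 hz.2.2.1 hz.2.2.2).continuousAt).comp
          (hzm_contAt w₀ (Or.inr him))
      refine hca.congr ?_
      have hopen : IsOpen {w : ℂ | w.im < 0} := isOpen_lt Complex.continuous_im continuous_const
      filter_upwards [hopen.mem_nhds hlt] with w hw
      exact (hgl w (fun h => by rw [h] at hw; simp at hw) hw).symm
    · -- upper half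
      have hz' := hupp w₀ hne habs hgt.le
      have hint : 0 < ((starRingEnd ℂ) (zm w₀)).im ∧ ((starRingEnd ℂ) (zm w₀)).im < 1 := by
        have he : ((starRingEnd ℂ) (zm w₀)).im = Complex.arg w₀ / Real.pi := by
          simp [hzm_im]; ring
        constructor
        · rw [he]
          have h1 : 0 ≤ Complex.arg w₀ := Complex.arg_nonneg_iff.2 hgt.le
          have h2 : Complex.arg w₀ ≠ 0 := by
            intro h
            rw [Complex.arg_eq_zero_iff] at h
            exact hgt.ne' h.2
          positivity
        · rw [he, div_lt_one hπ]
          refine lt_of_le_of_ne (Complex.arg_le_pi w₀) fun h => ?_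
          rw [Complex.arg_eq_pi_iff] at h
          exact hgt.ne' h.2
      have hca : ContinuousAt (fun w => (starRingEnd ℂ) (f ((starRingEnd ℂ) (zm w)))) w₀ := by
        have s1 : ContinuousAt zm w₀ := hzm_contAt w₀ (Or.inr him)
        have s2 : ContinuousAt (fun w => (starRingEnd ℂ) (zm w)) w₀ :=
          Complex.continuous_conj.continuousAt.comp s1
        have s3 : ContinuousAt (fun w => f ((starRingEnd ℂ) (zm w))) w₀ :=
          ContinuousAt.comp ((hfd _ hz'.2 hint.1 hint.2).continuousAt) s2
        exact Complex.continuous_conj.continuousAt.comp s3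
      refine hca.congr ?_
      have hopen : IsOpen {w : ℂ | 0 < w.im} := isOpen_lt continuous_const Complex.continuous_im
      filter_upwards [hopen.mem_nhds hgt] with w hw
      exact (hgu w (fun h => by rw [h] at hw; simp at hw) (le_of_lt hw)).symm
  -- continuity within D at real points
  have hcontB : ∀ w₀ : ℂ, w₀ ∈ D → w₀.im = 0 → ContinuousWithinAt g D w₀ := by
    intro w₀ hw₀ him
    obtain ⟨habs, hne⟩ := hDmem.1 hw₀
    have hrne : w₀.re ≠ 0 := by
      intro h; exact hne (Complex.ext h him)
    set ζ : ℂ := (starRingEnd ℂ) (zm w₀) with hζ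
    have hζS : ζ ∈ S := (hupp w₀ hne habs him.ge).1
    have hgw₀ : g w₀ = (starRingEnd ℂ) (f ζ) := hgu w₀ hne him.ge
    have hfζ : (starRingEnd ℂ) (f ζ) = f ζ := by
      rw [Complex.conj_eq_iff_im]
      rcases hrne.lt_or_gt with hneg | hpos
      · -- arg = π, ζ is on the top edge
        have harg : Complex.arg w₀ = Real.pi := Complex.arg_eq_pi_iff.2 ⟨hneg, him⟩
        have hζ1 : ζ = ((ζ.re : ℝ) : ℂ) + I := by
          apply Complex.ext
          · simp
          · simp [hζ, hzm_im, harg, hπ.ne']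
        rw [hζ1]
        exact hre1 _ (by simpa [hζ] using (hupp w₀ hne habs him.ge).2.le)
      · have harg : Complex.arg w₀ = 0 := by
          rw [Complex.arg_eq_zero_iff]
          exact ⟨hpos.le, him⟩
        have hζ1 : ζ = ((ζ.re : ℝ) : ℂ) := by
          apply Complex.ext
          · simp
          · simp [hζ, hzm_im, harg]
        rw [hζ1]
        exact hre0 _ (by simpa [hζ] using (hupp w₀ hne habs him.ge).2.le)
    have hsub : D ⊆ (D ∩ {w : ℂ | 0 ≤ w.im}) ∪ (D ∩ {w : ℂ | w.im < 0}) := by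
      intro w hw
      rcases le_or_gt 0 w.im with h | h
      · exact Or.inl ⟨hw, h⟩
      · exact Or.inr ⟨hw, h⟩
    -- tendsto of zm within the two half-neighbourhoods
    have hzm_up : Filter.Tendsto zm (nhdsWithin w₀ (D ∩ {w : ℂ | 0 ≤ w.im})) (nhds (zm w₀)) := by
      rcases hrne.lt_or_gt with hneg | hpos
      · have := Complex.continuousWithinAt_log_of_re_neg_of_im_zero hneg him
        have h2 : ContinuousWithinAt zm {w : ℂ | 0 ≤ w.im} w₀ := (this.neg).div_const _
        exact (h2.mono (inter_subset_right)).tendsto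
      · exact ((hzm_contAt w₀ (Or.inl hpos)).continuousWithinAt).tendsto
    have hzm_low : Filter.Tendsto zm (nhdsWithin w₀ (D ∩ {w : ℂ | w.im < 0})) (nhds ζ) := by
      rcases hrne.lt_or_gt with hneg | hpos
      · have hlog := Complex.tendsto_log_nhdsWithin_im_neg_of_re_neg_of_im_zero hneg him
        have h2 : Filter.Tendsto zm (nhdsWithin w₀ {w : ℂ | w.im < 0})
            (nhds (-(Real.log (Complex.abs w₀) - Real.pi * I) / (Real.pi : ℂ))) :=
          (hlog.neg).div_const _
        have h3 : -((Real.log (Complex.abs w₀) : ℂ) - Real.pi * I) / (Real.pi : ℂ) = ζ := by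
          have harg : Complex.arg w₀ = Real.pi := Complex.arg_eq_pi_iff.2 ⟨hneg, him⟩
          apply Complex.ext
          · simp [hζ, hzm_re, Complex.div_ofReal_re]
          · simp [hζ, hzm_im, harg, Complex.div_ofReal_im, hπ.ne']
        rw [h3] at h2
        exact h2.mono_left (nhdsWithin_mono _ inter_subset_right)
      · have h3 : zm w₀ = ζ := by
          have harg : Complex.arg w₀ = 0 := Complex.arg_eq_zero_iff.2 ⟨hpos.le, him⟩
          apply Complex.ext
          · simp [hζ]
          · simp [hζ, hzm_im, harg]
        rw [← h3]
        exact (hzm_contAt w₀ (Or.inl hpos)).tendsto.mono_left nhdsWithin_le_nhds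
    have hup : ContinuousWithinAt g (D ∩ {w : ℂ | 0 ≤ w.im}) w₀ := by
      have hmaps : MapsTo (fun w => (starRingEnd ℂ) (zm w)) (D ∩ {w : ℂ | 0 ≤ w.im}) S := by
        intro w hw
        obtain ⟨habs', hne'⟩ := hDmem.1 hw.1
        exact (hupp w hne' habs' hw.2).1
      have hinner : ContinuousWithinAt (fun w => (starRingEnd ℂ) (zm w))
          (D ∩ {w : ℂ | 0 ≤ w.im}) w₀ :=
        Complex.continuous_conj.continuousAt.comp_continuousWithinAt
          (ContinuousWithinAt.mono (by exact hzm_up) (le_refl _) |>.mono (le_refl _))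
      have hcomp : ContinuousWithinAt (fun w => f ((starRingEnd ℂ) (zm w)))
          (D ∩ {w : ℂ | 0 ≤ w.im}) w₀ :=
        ContinuousWithinAt.comp (hfc ζ hζS) hinner hmaps
      have : ContinuousWithinAt (fun w => (starRingEnd ℂ) (f ((starRingEnd ℂ) (zm w))))
          (D ∩ {w : ℂ | 0 ≤ w.im}) w₀ :=
        Complex.continuous_conj.continuousAt.comp_continuousWithinAt hcomp
      refine this.congr ?_ ?_
      · intro w hw
        obtain ⟨habs', hne'⟩ := hDmem.1 hw.1
        exact hgu w hne' hw.2
      · exact hgw₀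
    have hlow' : ContinuousWithinAt g (D ∩ {w : ℂ | w.im < 0}) w₀ := by
      rw [ContinuousWithinAt, hgw₀, hfζ]
      have hmaps : ∀ᶠ w in nhdsWithin w₀ (D ∩ {w : ℂ | w.im < 0}), zm w ∈ S := by
        filter_upwards [self_mem_nhdsWithin] with w hw
        exact (hlow w (hDmem.1 hw.1).1 hw.2).1
      have hzm_low' : Filter.Tendsto zm (nhdsWithin w₀ (D ∩ {w : ℂ | w.im < 0}))
          (nhdsWithin ζ S) := by
        rw [tendsto_nhdsWithin_iff]
        exact ⟨hzm_low, hmaps⟩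
      have : Filter.Tendsto (fun w => f (zm w)) (nhdsWithin w₀ (D ∩ {w : ℂ | w.im < 0}))
          (nhds (f ζ)) := (hfc ζ hζS).tendsto.comp hzm_low'
      refine this.congr' ?_
      filter_upwards [self_mem_nhdsWithin] with w hw
      exact (hgl w (hDmem.1 hw.1).2 hw.2).symm
    exact ((hup.union hlow').mono hsub)
  have hgc : ContinuousOn g D := by
    intro w₀ hw₀
    rcases eq_or_ne w₀.im 0 with h | h
    · exact hcontB w₀ hw₀ h
    · exact (hcontA w₀ hw₀ h).continuousWithinAt
  -- differentiability off the real axis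
  have hdiffA : ∀ w₀ : ℂ, w₀ ∈ D → w₀.im ≠ 0 → DifferentiableAt ℂ g w₀ := by
    intro w₀ hw₀ him
    obtain ⟨habs, hne⟩ := hDmem.1 hw₀
    rcases him.lt_or_gt with hlt | hgt
    · have hz := hlow w₀ habs hlt
      have hda : DifferentiableAt ℂ (fun w => f (zm w)) w₀ :=
        DifferentiableAt.comp w₀ (hfd _ hz.2.1 hz.2.2.1 hz.2.2.2) (hzm_diffAt w₀ (Or.inr him))
      refine (Filter.EventuallyEq.differentiableAt_iff ?_).2 hda
      have hopen : IsOpen {w : ℂ | w.im < 0} := isOpen_lt Complex.continuous_im continuous_const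
      filter_upwards [hopen.mem_nhds hlt] with w hw
      exact hgl w (fun h => by rw [h] at hw; simp at hw) hw
    · have hz' := hupp w₀ hne habs hgt.le
      have hint : 0 < ((starRingEnd ℂ) (zm w₀)).im ∧ ((starRingEnd ℂ) (zm w₀)).im < 1 := by
        have he : ((starRingEnd ℂ) (zm w₀)).im = Complex.arg w₀ / Real.pi := by
          simp [hzm_im]; ring
        constructor
        · rw [he]
          have h1 : 0 ≤ Complex.arg w₀ := Complex.arg_nonneg_iff.2 hgt.le
          have h2 : Complex.arg w₀ ≠ 0 := by
            intro h
            rw [Complex.arg_eq_zero_iff] at h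
            exact hgt.ne' h.2
          positivity
        · rw [he, div_lt_one hπ]
          refine lt_of_le_of_ne (Complex.arg_le_pi w₀) fun h => ?_
          rw [Complex.arg_eq_pi_iff] at h
          exact hgt.ne' h.2
      have hd := (hfd _ hz'.2 hint.1 hint.2).hasDerivAt
      have hdd : HasDerivAt (fun ζ => (starRingEnd ℂ) (f ((starRingEnd ℂ) ζ)))
          ((starRingEnd ℂ) (deriv f ((starRingEnd ℂ) (zm w₀)))) (zm w₀) :=
        hasDerivAt_conj_conj (by simpa using hd)
      have hda : DifferentiableAt ℂ ((fun ζ => (starRingEnd ℂ) (f ((starRingEnd ℂ) ζ))) ∘ zm) w₀ :=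
        DifferentiableAt.comp w₀ hdd.differentiableAt (hzm_diffAt w₀ (Or.inr him))
      refine (Filter.EventuallyEq.differentiableAt_iff ?_).2 hda
      have hopen : IsOpen {w : ℂ | 0 < w.im} := isOpen_lt continuous_const Complex.continuous_im
      filter_upwards [hopen.mem_nhds hgt] with w hw
      exact hgu w (fun h => by rw [h] at hw; simp at hw) (le_of_lt hw)
  -- differentiability at real points, by Morera
  have hdiffR : ∀ w₀ : ℂ, w₀ ∈ D → w₀.im = 0 → DifferentiableAt ℂ g w₀ := by
    intro w₀ hw₀ him
    obtain ⟨habs, hne⟩ := hDmem.1 hw₀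
    have habs0 : 0 < Complex.abs w₀ := Complex.abs.pos hne
    set r : ℝ := min ((1 - Complex.abs w₀)/4) ((Complex.abs w₀)/4) with hr
    have hrpos : 0 < r := lt_min (by linarith) (by linarith)
    set Ix : Set ℝ := Ioo (w₀.re - r) (w₀.re + r) with hIx
    set Iy : Set ℝ := Ioo (w₀.im - r) (w₀.im + r) with hIy
    have hQsub : ∀ w : ℂ, w.re ∈ Ix → w.im ∈ Iy → w ∈ D := by
      intro w hwre hwim
      have h1 : |(w - w₀).re| < r := by
        rw [Complex.sub_re, abs_sub_lt_iff]
        exact ⟨by linarith [hwre.1, hwre.2], by linarith [hwre.1, hwre.2]⟩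
      have h2 : |(w - w₀).im| < r := by
        rw [Complex.sub_im, abs_sub_lt_iff]
        exact ⟨by linarith [hwim.1, hwim.2], by linarith [hwim.1, hwim.2]⟩
      have h3 : Complex.abs (w - w₀) < 2 * r :=
        lt_of_le_of_lt (Complex.abs_le_abs_re_add_abs_im _) (by linarith)
      have h4 : 2 * r ≤ (1 - Complex.abs w₀)/2 := by
        have := min_le_left ((1 - Complex.abs w₀)/4) ((Complex.abs w₀)/4)
        rw [← hr] at this; linarith
      have h5 : 2 * r ≤ (Complex.abs w₀)/2 := by
        have := min_le_right ((1 - Complex.abs w₀)/4) ((Complex.abs w₀)/4)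
        rw [← hr] at this; linarith
      have hub : Complex.abs w < 1 := by
        calc Complex.abs w ≤ Complex.abs w₀ + Complex.abs (w - w₀) := by
              simpa using Complex.abs.add_le w₀ (w - w₀)
          _ < Complex.abs w₀ + (1 - Complex.abs w₀)/2 := by linarith
          _ ≤ 1 := by linarith
      have hlb : w ≠ 0 := by
        intro h
        rw [h] at h3
        simp only [zero_sub, map_neg_eq_map] at h3
        linarith
      exact hDmem.2 ⟨hub, hlb⟩
    have hseg : ∀ a ∈ Ix, ∀ c ∈ Iy, ∀ d ∈ Iy,
        IntervalIntegrable (fun y : ℝ => g (a + y * I)) MeasureTheory.volume c d := by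
      intro a ha c hc d hd
      apply ContinuousOn.intervalIntegrable
      apply hgc.comp (Continuous.continuousOn
        (continuous_const.add ((Complex.continuous_ofReal).mul continuous_const)))
      intro y hy
      refine hQsub _ (by simpa using ha) (by simpa [hIy] using Set.ordConnected_Ioo.uIcc_subset hc hd hy)
    have h0y : (0:ℝ) ∈ Iy := by
      rw [hIy, him]
      exact ⟨by linarith, by linarith⟩
    have himne : ∀ {a t : ℝ}, t ∈ Ioo (min a 0) (max a 0) → t ≠ 0 := by
      intro a t ht h
      rw [h] at ht
      have h1 : a < 0 := by
        rcases min_lt_iff.1 ht.1 with h | h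
        exacts [h, absurd h (lt_irrefl _)]
      have h2 : 0 < a := by
        rcases lt_max_iff.1 ht.2 with h | h
        exacts [h, absurd h (lt_irrefl _)]
      linarith
    have hhalf : ∀ x₁ ∈ Ix, ∀ x₂ ∈ Ix, ∀ a ∈ Iy, ∀ b ∈ Iy, (∀ t ∈ Ioo (min a b) (max a b), t ≠ 0) →
        RectSum g x₁ x₂ a b = 0 := by
      intro x₁ hx₁ x₂ hx₂ a ha b hb hne'
      apply rectSum_eq_zero
      · apply hgc.mono
        intro w hw
        rw [Complex.mem_reProdIm] at hw
        exact hQsub _ (Set.ordConnected_Ioo.uIcc_subset hx₁ hx₂ hw.1)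
          (Set.ordConnected_Ioo.uIcc_subset ha hb hw.2)
      · intro w hw
        rw [Complex.mem_reProdIm] at hw
        have hIoo1 : Ioo (min x₁ x₂) (max x₁ x₂) ⊆ Ix := by
          refine subset_trans ?_ (Set.ordConnected_Ioo.uIcc_subset hx₁ hx₂)
          rw [Set.uIcc]
          exact Ioo_subset_Icc_self
        have hIoo2 : Ioo (min a b) (max a b) ⊆ Iy := by
          refine subset_trans ?_ (Set.ordConnected_Ioo.uIcc_subset ha hb)
          rw [Set.uIcc]
          exact Ioo_subset_Icc_self
        have hwD : w ∈ D := hQsub _ (hIoo1 hw.1) (hIoo2 hw.2)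
        exact (hdiffA w hwD (hne' w.im hw.2)).differentiableWithinAt
    have hQc : ContinuousOn g (Ioo (w₀.re - r) (w₀.re + r) ×ℂ Ioo (w₀.im - r) (w₀.im + r)) := by
      refine hgc.mono fun w hw => ?_
      rw [Complex.mem_reProdIm] at hw
      exact hQsub w hw.1 hw.2
    refine moreraAt hrpos hQc ?_
    intro x₁ x₂ y₁ y₂ hx₁ hx₂ hy₁ hy₂
    rw [← hIx] at hx₁ hx₂
    rw [← hIy] at hy₁ hy₂
    rw [rectSum_add_y (hseg x₁ hx₁ y₁ hy₁ 0 h0y) (hseg x₁ hx₁ 0 h0y y₂ hy₂)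
      (hseg x₂ hx₂ y₁ hy₁ 0 h0y) (hseg x₂ hx₂ 0 h0y y₂ hy₂)]
    rw [hhalf x₁ hx₁ x₂ hx₂ y₁ hy₁ 0 h0y (fun t ht => himne (by simpa using ht)),
      hhalf x₁ hx₁ x₂ hx₂ 0 h0y y₂ hy₂ (fun t ht => himne (by
        rw [min_comm, max_comm] at ht
        simpa using ht))]
    simp
  -- removable singularity at 0
  have hsmall : ∀ ε > (0:ℝ), ∃ δ > (0:ℝ), ∀ w : ℂ, Complex.abs w < δ → Complex.abs (g w) ≤ ε := by
    intro ε hε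
    obtain ⟨s₀, hs₀⟩ := hlim ε hε
    set s₁ : ℝ := max s₀ 0 with hs₁
    refine ⟨Real.exp (-Real.pi * s₁), Real.exp_pos _, fun w hw => ?_⟩
    rcases eq_or_ne w 0 with rfl | h0
    · rw [hg0]; simpa using hε.le
    have habs0 : 0 < Complex.abs w := Complex.abs.pos h0
    have hw1 : Complex.abs w < 1 := by
      refine lt_of_lt_of_le hw (Real.exp_le_one_iff.2 ?_)
      have : 0 ≤ s₁ := le_max_right _ _
      nlinarith [hπ]
    have hres : s₀ ≤ (zm w).re := by
      rw [hzm_re]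
      rw [le_div_iff₀ hπ]
      have hlog : Real.log (Complex.abs w) < -Real.pi * s₁ := by
        have := Real.log_lt_log habs0 hw
        rwa [Real.log_exp] at this
      have hs : s₀ ≤ s₁ := le_max_left _ _
      nlinarith [hπ]
    have happ : ∀ ζ : ℂ, ζ ∈ S → s₀ ≤ ζ.re → Complex.abs (f ζ) ≤ ε := by
      intro ζ hζ hsre
      have := hs₀ ζ.re hsre ζ.im ⟨hζ.2.1, hζ.2.2⟩
      rwa [Complex.re_add_im] at this
    rcases lt_or_ge w.im 0 with h2 | h2
    · rw [hgl w h0 h2]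
      exact happ _ (hlow w hw1 h2).1 hres
    · rw [hgu w h0 h2, Complex.abs_conj]
      refine happ _ (hupp w h0 hw1 h2).1 ?_
      simpa using hres
  have hc0 : ContinuousAt g 0 := by
    rw [Metric.continuousAt_iff]
    intro ε hε
    obtain ⟨δ, hδ, hδg⟩ := hsmall (ε/2) (half_pos hε)
    refine ⟨δ, hδ, fun {w} hwd => ?_⟩
    rw [hg0, dist_zero_right]
    calc ‖g w‖ = Complex.abs (g w) := rfl
      _ ≤ ε/2 := hδg w (by rwa [dist_zero_right] at hwd)
      _ < ε := by linarith
  have hDdiff : ∀ w ∈ D, DifferentiableAt ℂ g w := by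
    intro w hw
    rcases eq_or_ne w.im 0 with h | h
    · exact hdiffR w hw h
    · exact hdiffA w hw h
  have hg0a : AnalyticAt ℂ g 0 := by
    refine Complex.analyticAt_of_differentiable_on_punctured_nhds_of_continuousAt ?_ hc0
    have hball : ball (0:ℂ) 1 ∈ nhds (0:ℂ) := Metric.ball_mem_nhds _ one_pos
    rw [eventually_nhdsWithin_iff]
    filter_upwards [hball] with w hw hne
    exact hDdiff w ⟨hw, hne⟩
  have hgball : DifferentiableOn ℂ g (ball (0:ℂ) 1) := by
    intro w hw
    rcases eq_or_ne w 0 with rfl | h0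
    · exact hg0a.differentiableAt.differentiableWithinAt
    · exact (hDdiff w ⟨hw, h0⟩).differentiableWithinAt
  -- Schwarz-type bound
  have hmaps : MapsTo g (ball (0:ℂ) 1) (ball (g 0) (M + 1)) := by
    intro w hw
    rw [hg0, mem_ball, dist_zero_right]
    calc ‖g w‖ = Complex.abs (g w) := rfl
      _ ≤ M := hgb w (by rw [mem_ball_zero_iff, Complex.norm_eq_abs] at hw; exact hw)
      _ < M + 1 := by linarith
  have hschwarz : ∀ w : ℂ, Complex.abs w < 1 → Complex.abs (g w) ≤ (M+1) * Complex.abs w := by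
    intro w hw
    have := Complex.dist_le_div_mul_dist_of_mapsTo_ball hgball (hmaps.mono_right ball_subset_closedBall)
      (mem_ball_zero_iff.2 (by rwa [Complex.norm_eq_abs]))
    rw [hg0, dist_zero_right, dist_zero_right, Complex.norm_eq_abs, Complex.norm_eq_abs,
      div_one] at this
    exact this
  -- conclusion
  refine ⟨M + 1, by linarith, fun s hs t ht => ?_⟩
  rcases eq_or_lt_of_le hs with rfl | hspos
  · have hmm : ((0:ℝ):ℂ) + (t:ℂ) * I ∈ S :=
      hmemS _ (by simp) (by simpa using ht.1) (by simpa using ht.2)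
    have h1 := hM _ hmm
    have h2 : -Real.pi * (0:ℝ) = 0 := by ring
    rw [h2, Real.exp_zero, mul_one]
    linarith
  · set w : ℂ := Complex.exp (-(Real.pi : ℂ) * ((s:ℂ) + (t:ℂ) * I)) with hwdef
    have hwne : w ≠ 0 := Complex.exp_ne_zero _
    have hzre : (-(Real.pi : ℂ) * ((s:ℂ) + (t:ℂ) * I)).re = -(Real.pi * s) := by
      simp
    have hzim : (-(Real.pi : ℂ) * ((s:ℂ) + (t:ℂ) * I)).im = -(Real.pi * t) := by
      simp
    have habsw : Complex.abs w = Real.exp (-(Real.pi * s)) := by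
      rw [hwdef, Complex.abs_exp, hzre]
    have hwlt : Complex.abs w < 1 := by
      rw [habsw]
      apply Real.exp_lt_one_iff.2
      nlinarith [hπ]
    have himw : w.im = -(Real.exp (-(Real.pi * s)) * Real.sin (Real.pi * t)) := by
      rw [hwdef, Complex.exp_im, hzre, hzim, Real.sin_neg]
      ring
    have hgoal : Complex.abs (f ((s:ℂ) + (t:ℂ) * I)) = Complex.abs (g w) := by
      rcases eq_or_lt_of_le ht.1 with h0 | h0
      · -- t = 0
        have ht0 : t = 0 := h0.symm
        subst ht0
        have himw0 : w.im = 0 := by rw [himw]; simp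
        rw [hgu w hwne himw0.ge, Complex.abs_conj]
        have hlogw : Complex.log w = -(Real.pi : ℂ) * ((s:ℂ) + ((0:ℝ):ℂ) * I) := by
          rw [hwdef]
          exact Complex.log_exp (by rw [hzim]; nlinarith) (by rw [hzim]; nlinarith)
        have hzmw : zm w = (s:ℂ) := by
          simp only [hzm]
          rw [hlogw]
          field_simp
          simp
        rw [hzmw]
        simp
      rcases eq_or_lt_of_le ht.2 with h1 | h1
      · -- t = 1
        have ht1 : t = 1 := h1
        subst ht1
        have hwre : w = -(Real.exp (-(Real.pi * s)) : ℂ) := by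
          rw [hwdef]
          have he : (-(Real.pi : ℂ) * ((s:ℂ) + ((1:ℝ):ℂ) * I)) =
              ((-(Real.pi * s) : ℝ) : ℂ) + -((Real.pi : ℂ) * I) := by
            push_cast; ring
          rw [he, Complex.exp_add, Complex.exp_neg, Complex.exp_pi_mul_I,
            ← Complex.ofReal_exp]
          norm_num
        have hargw : Complex.arg w = Real.pi := by
          rw [Complex.arg_eq_pi_iff, hwre]
          constructor
          · simp only [Complex.neg_re, Complex.ofReal_re, neg_lt_zero]
            exact Real.exp_pos _
          · simp only [Complex.neg_im, Complex.ofReal_im, neg_zero]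
        have himw0 : 0 ≤ w.im := by
          rw [himw]
          simp [Real.sin_pi]
        rw [hgu w hwne himw0, Complex.abs_conj]
        have hzmw : (starRingEnd ℂ) (zm w) = (s:ℂ) + (1:ℝ) * I := by
          apply Complex.ext
          · rw [Complex.conj_re, hzm_re, habsw, Real.log_exp]
            simp [hπ.ne']
          · rw [Complex.conj_im, hzm_im, hargw]
            field_simp
            simp
        rw [hzmw]
      · -- 0 < t < 1
        have hsin : 0 < Real.sin (Real.pi * t) := by
          apply Real.sin_pos_of_pos_of_lt_pi
          · positivity
          · nlinarith [hπ]
        have himw0 : w.im < 0 := by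
          rw [himw, neg_lt_zero]
          exact mul_pos (Real.exp_pos _) hsin
        rw [hgl w hwne himw0]
        have hlogw : Complex.log w = -(Real.pi : ℂ) * ((s:ℂ) + (t:ℂ) * I) := by
          rw [hwdef]
          exact Complex.log_exp (by rw [hzim]; nlinarith) (by rw [hzim]; nlinarith)
        have hzmw : zm w = (s:ℂ) + (t:ℂ) * I := by
          simp only [hzm]
          rw [hlogw]
          field_simp
        rw [hzmw]
    have hfin := hschwarz w hwlt
    rw [habsw] at hfin
    rw [hgoal, neg_mul]
    exact hfin
/-- The linear Lagrangian `Λ₀ = {z ∈ ℂⁿ : Re zⱼ = 0 for all j}`. -/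
def Lambda0 (n : ℕ) : Set (EuclideanSpace ℂ (Fin n)) :=
  {z | ∀ j : Fin n, (z j).re = 0}

/-- The linear Lagrangian `Λ₁ = {z ∈ ℂⁿ : Re zⱼ = 0 for j ≤ m, Im zⱼ = 0 for j > m}`. -/
def Lambda1 (n m : ℕ) : Set (EuclideanSpace ℂ (Fin n)) :=
  {z | (∀ j : Fin n, (j : ℕ) < m → (z j).re = 0) ∧
       (∀ j : Fin n, m ≤ (j : ℕ) → (z j).im = 0)}

/-- exponential convergence for finite-energy holomorphic half-strips
with Lagrangian boundary conditions that converge uniformly to a point `p`: the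
convergence is exponential in the first coordinate. -/
theorem strip_exponential_convergence (n m : ℕ) (hn : 1 ≤ n) (hm : m ≤ n)
    (u u' : ℂ → EuclideanSpace ℂ (Fin n)) (p : EuclideanSpace ℂ (Fin n))
    (hcont : ContinuousOn u {z : ℂ | 0 ≤ z.re ∧ 0 ≤ z.im ∧ z.im ≤ 1})
    (hderiv : ∀ z : ℂ, 0 < z.re → 0 < z.im → z.im < 1 → HasDerivAt u (u' z) z)
    (hbd0 : ∀ z : ℂ, 0 ≤ z.re → z.im = 0 → u z ∈ Lambda0 n)
    (hbd1 : ∀ z : ℂ, 0 ≤ z.re → z.im = 1 → u z ∈ Lambda1 n m)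
    (henergy : IntegrableOn (fun z => ‖u' z‖ ^ 2)
      {z : ℂ | 0 < z.re ∧ 0 < z.im ∧ z.im < 1})
    (hconv : ∀ ε > (0:ℝ), ∃ s₀ : ℝ, ∀ s ≥ s₀, ∀ t ∈ Set.Icc (0:ℝ) 1,
      ‖u ((s : ℂ) + (t : ℂ) * Complex.I) - p‖ ≤ ε) :
    ∃ c > (0:ℝ), ∃ γ > (0:ℝ), ∀ s ≥ (0:ℝ), ∀ t ∈ Set.Icc (0:ℝ) 1,
      ‖u ((s : ℂ) + (t : ℂ) * Complex.I) - p‖ ≤ c * Real.exp (-γ * s) := by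
  have hπ : (0:ℝ) < Real.pi := Real.pi_pos
  set S : Set ℂ := {z : ℂ | 0 ≤ z.re ∧ 0 ≤ z.im ∧ z.im ≤ 1} with hSdef
  -- component norm bound
  have hpn : ∀ (x : EuclideanSpace ℂ (Fin n)) (j : Fin n), Complex.abs (x j) ≤ ‖x‖ := by
    intro x j
    rw [EuclideanSpace.norm_eq]
    rw [show Complex.abs (x j) = Real.sqrt (‖x j‖^2) by
      rw [Real.sqrt_sq (norm_nonneg _)]; rfl]
    apply Real.sqrt_le_sqrt
    exact Finset.single_le_sum (f := fun i => ‖x i‖^2) (fun i _ => sq_nonneg _)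
      (Finset.mem_univ j)
  -- the limit point is in both Lagrangians
  have hsmallall : ∀ (j : Fin n) (v : ℂ), (∀ ε > (0:ℝ), Complex.abs v ≤ ε) → v = 0 := by
    intro j v hv
    by_contra h
    have h1 : 0 < Complex.abs v := Complex.abs.pos h
    have := hv (Complex.abs v / 2) (by linarith)
    linarith
  have hcompdiff : ∀ (s t : ℝ) (j : Fin n),
      u ((s:ℂ) + (t:ℂ) * Complex.I) j - p j
        = (u ((s:ℂ) + (t:ℂ) * Complex.I) - p) j := by
    intro s t j
    simp
  have hp0 : ∀ j : Fin n, (p j).re = 0 := by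
    intro j
    have : ∀ ε > (0:ℝ), |(p j).re| ≤ ε := by
      intro ε hε
      obtain ⟨s₀, hs₀⟩ := hconv ε hε
      set s := max s₀ 0 with hs
      have hz := hs₀ s (le_max_left _ _) 0 ⟨le_refl _, zero_le_one⟩
      have hre : (u ((s:ℂ) + (0:ℝ) * Complex.I) j).re = 0 := by
        have := hbd0 ((s:ℂ) + (0:ℝ) * Complex.I) (by simp; exact le_max_right _ _) (by simp)
        exact this j
      calc |(p j).re| = |(u ((s:ℂ) + (0:ℝ) * Complex.I) j - p j).re| := by
            rw [Complex.sub_re, hre]; simp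
        _ ≤ Complex.abs (u ((s:ℂ) + (0:ℝ) * Complex.I) j - p j) := Complex.abs_re_le_abs _
        _ ≤ ‖u ((s:ℂ) + (0:ℝ) * Complex.I) - p‖ := by rw [hcompdiff]; exact hpn _ j
        _ ≤ ε := hz
    by_contra h
    have h1 : 0 < |(p j).re| := abs_pos.2 h
    have := this (|(p j).re| / 2) (by linarith)
    linarith
  have hp1 : ∀ j : Fin n, m ≤ (j:ℕ) → (p j).im = 0 := by
    intro j hj
    have : ∀ ε > (0:ℝ), |(p j).im| ≤ ε := by
      intro ε hε
      obtain ⟨s₀, hs₀⟩ := hconv ε hε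
      set s := max s₀ 0 with hs
      have hz := hs₀ s (le_max_left _ _) 1 ⟨zero_le_one, le_refl _⟩
      have hre : (u ((s:ℂ) + (1:ℝ) * Complex.I) j).im = 0 := by
        have := hbd1 ((s:ℂ) + (1:ℝ) * Complex.I) (by simp; exact le_max_right _ _) (by simp)
        exact this.2 j hj
      calc |(p j).im| = |(u ((s:ℂ) + (1:ℝ) * Complex.I) j - p j).im| := by
            rw [Complex.sub_im, hre]; simp
        _ ≤ Complex.abs (u ((s:ℂ) + (1:ℝ) * Complex.I) j - p j) := Complex.abs_im_le_abs _
        _ ≤ ‖u ((s:ℂ) + (1:ℝ) * Complex.I) - p‖ := by rw [hcompdiff]; exact hpn _ j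
        _ ≤ ε := hz
    by_contra h
    have h1 : 0 < |(p j).im| := abs_pos.2 h
    have := this (|(p j).im| / 2) (by linarith)
    linarith
  -- global bound on ‖u - p‖
  obtain ⟨B, hBpos, hB⟩ : ∃ B : ℝ, 0 < B ∧ ∀ z ∈ S, ‖u z - p‖ ≤ B := by
    obtain ⟨s₀, hs₀⟩ := hconv 1 one_pos
    set s₁ : ℝ := max s₀ 0 with hs₁
    have hK : IsCompact ((fun q : ℝ × ℝ => (q.1 : ℂ) + (q.2 : ℂ) * Complex.I) ''
        (Set.Icc 0 s₁ ×ˢ Set.Icc 0 1)) :=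
      (isCompact_Icc.prod isCompact_Icc).image
        ((Complex.continuous_ofReal.comp continuous_fst).add
          ((Complex.continuous_ofReal.comp continuous_snd).mul continuous_const))
    have hKS : ((fun q : ℝ × ℝ => (q.1 : ℂ) + (q.2 : ℂ) * Complex.I) ''
        (Set.Icc 0 s₁ ×ˢ Set.Icc 0 1)) ⊆ S := by
      rintro z ⟨⟨a, b⟩, ⟨ha, hb⟩, rfl⟩
      exact ⟨by simp [ha.1], by simp [hb.1], by simp [hb.2]⟩
    obtain ⟨B₀, hB₀⟩ := hK.exists_bound_of_continuousOn
      (((hcont.mono hKS).sub continuousOn_const))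
    refine ⟨max B₀ 1, lt_of_lt_of_le one_pos (le_max_right _ _), fun z hz => ?_⟩
    rcases le_or_gt z.re s₁ with h | h
    · have : z ∈ (fun q : ℝ × ℝ => (q.1 : ℂ) + (q.2 : ℂ) * Complex.I) ''
          (Set.Icc 0 s₁ ×ˢ Set.Icc 0 1) :=
        ⟨(z.re, z.im), ⟨⟨hz.1, h⟩, ⟨hz.2.1, hz.2.2⟩⟩, by simp [Complex.re_add_im]⟩
      exact le_trans (hB₀ z this) (le_max_left _ _)
    · have := hs₀ z.re (le_trans (le_max_left _ _) h.le) z.im ⟨hz.2.1, hz.2.2⟩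
      rw [Complex.re_add_im] at this
      exact le_trans this (le_max_right _ _)
  -- continuity / differentiability of components
  have hcj : ∀ j : Fin n, ContinuousOn (fun z => u z j) S := by
    intro j
    exact (EuclideanSpace.proj (𝕜 := ℂ) j).continuous.comp_continuousOn hcont
  have hdj : ∀ (j : Fin n) (z : ℂ), 0 < z.re → 0 < z.im → z.im < 1 →
      DifferentiableAt ℂ (fun z => u z j) z := by
    intro j z h1 h2 h3
    exact (((EuclideanSpace.proj (𝕜 := ℂ) j).differentiableAt).comp z
      (hderiv z h1 h2 h3).differentiableAt : DifferentiableAt ℂ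
        ((EuclideanSpace.proj (𝕜 := ℂ) j) ∘ u) z)
  -- per-component exponential decay
  have hcomp : ∀ j : Fin n, ∃ C : ℝ, 0 < C ∧ ∀ s ≥ (0:ℝ), ∀ t ∈ Set.Icc (0:ℝ) 1,
      Complex.abs (u ((s:ℂ) + (t:ℂ) * Complex.I) j - p j)
        ≤ C * Real.exp (-(Real.pi/2) * s) := by
    intro j
    have hexp_half : ∀ s : ℝ, 0 ≤ s → Real.exp (-Real.pi * s) ≤ Real.exp (-(Real.pi/2) * s) := by
      intro s hs
      apply Real.exp_le_exp.2
      nlinarith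
    rcases lt_or_ge (j:ℕ) m with hjm | hjm
    · -- components with `j < m`
      obtain ⟨c, hc, hdecay⟩ := strip_decay (fun z => Complex.I * (u z j - p j))
        ((continuousOn_const.mul ((hcj j).sub continuousOn_const)))
        (fun z h1 h2 h3 => (((hdj j z h1 h2 h3).sub_const _).const_mul _))
        (fun x hx => by
          have h0 := hbd0 ((x:ℝ):ℂ) (by simpa using hx) (by simp)
          have h1 : (u ((x:ℝ):ℂ) j).re = 0 := h0 j
          simp [Complex.mul_im, Complex.sub_re, Complex.sub_im, h1, hp0 j])
        (fun x hx => by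
          have h0 := hbd1 (((x:ℝ):ℂ) + Complex.I) (by simpa using hx) (by simp)
          have h1 : (u (((x:ℝ):ℂ) + Complex.I) j).re = 0 := h0.1 j hjm
          simp [Complex.mul_im, Complex.sub_re, Complex.sub_im, h1, hp0 j])
        (by
          intro ε hε
          obtain ⟨s₀, hs₀⟩ := hconv ε hε
          refine ⟨s₀, fun s hs t ht => ?_⟩
          rw [map_mul, Complex.abs_I, one_mul]
          calc Complex.abs (u ((s:ℂ) + (t:ℂ) * Complex.I) j - p j)
              ≤ ‖u ((s:ℂ) + (t:ℂ) * Complex.I) - p‖ := by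
                rw [hcompdiff]; exact hpn _ j
            _ ≤ ε := hs₀ s hs t ht)
      refine ⟨c, hc, fun s hs t ht => ?_⟩
      have h1 := hdecay s hs t ht
      rw [map_mul, Complex.abs_I, one_mul] at h1
      calc Complex.abs (u ((s:ℂ) + (t:ℂ) * Complex.I) j - p j)
          ≤ c * Real.exp (-Real.pi * s) := h1
        _ ≤ c * Real.exp (-(Real.pi/2) * s) := by
            have := hexp_half s hs
            nlinarith
    · -- components with `m ≤ j`
      have hpim : (p j).im = 0 := hp1 j hjm
      obtain ⟨c, hc, hdecay⟩ := strip_decay (fun z => (u z j)^2 - (p j)^2)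
        ((((hcj j).pow 2).sub continuousOn_const))
        (fun z h1 h2 h3 => (((hdj j z h1 h2 h3).pow 2).sub_const _))
        (fun x hx => by
          have h0 := hbd0 ((x:ℝ):ℂ) (by simpa using hx) (by simp)
          have h1 : (u ((x:ℝ):ℂ) j).re = 0 := h0 j
          simp [pow_two, Complex.mul_im, Complex.sub_im, h1, hpim])
        (fun x hx => by
          have h0 := hbd1 (((x:ℝ):ℂ) + Complex.I) (by simpa using hx) (by simp)
          have h1 : (u (((x:ℝ):ℂ) + Complex.I) j).im = 0 := h0.2 j hjm
          simp [pow_two, Complex.mul_im, Complex.sub_im, h1, hpim])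
        (by
          intro ε' hε'
          set D : ℝ := 1 + 2 * Complex.abs (p j) with hD
          have hDpos : 0 < D := by positivity
          set ε : ℝ := min 1 (ε'/D) with hε
          have hεpos : 0 < ε := lt_min one_pos (by positivity)
          obtain ⟨s₀, hs₀⟩ := hconv ε hεpos
          refine ⟨s₀, fun s hs t ht => ?_⟩
          show Complex.abs ((u ((s:ℂ) + (t:ℂ) * Complex.I) j)^2 - (p j)^2) ≤ ε'
          set a : ℂ := u ((s:ℂ) + (t:ℂ) * Complex.I) j with ha
          set b : ℂ := p j with hb
          have hab : Complex.abs (a - b) ≤ ε := by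
            calc Complex.abs (a - b) ≤ ‖u ((s:ℂ) + (t:ℂ) * Complex.I) - p‖ := by
                  rw [ha, hb, hcompdiff]; exact hpn _ j
              _ ≤ ε := hs₀ s hs t ht
          have hsum : Complex.abs (a + b) ≤ ε + 2 * Complex.abs b := by
            have : a + b = (a - b) + b + b := by ring
            rw [this]
            calc Complex.abs ((a - b) + b + b) ≤ Complex.abs ((a-b) + b) + Complex.abs b :=
                Complex.abs.add_le _ _
              _ ≤ Complex.abs (a-b) + Complex.abs b + Complex.abs b := by
                  have := Complex.abs.add_le (a-b) b
                  linarith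
              _ ≤ ε + 2 * Complex.abs b := by linarith
          have hsq : a^2 - b^2 = (a + b) * (a - b) := sq_sub_sq a b
          rw [hsq, map_mul]
          have hε1 : ε ≤ 1 := min_le_left _ _
          have hε2 : ε ≤ ε'/D := min_le_right _ _
          calc Complex.abs (a + b) * Complex.abs (a - b)
              ≤ (ε + 2 * Complex.abs b) * ε := by
                apply mul_le_mul hsum hab (Complex.abs.nonneg _)
                positivity
            _ ≤ D * ε := by
                apply mul_le_mul_of_nonneg_right _ hεpos.le
                rw [hD]; linarith
            _ ≤ ε' := by
                rw [← le_div_iff₀' hDpos]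
                exact hε2)
      rcases eq_or_ne (p j) 0 with hb0 | hb0
      · -- limit component is zero : take square roots
        refine ⟨Real.sqrt c, Real.sqrt_pos.2 hc, fun s hs t ht => ?_⟩
        have h1 := hdecay s hs t ht
        rw [hb0] at h1 ⊢
        have h2 : (Complex.abs (u ((s:ℂ) + (t:ℂ) * Complex.I) j - 0))^2
            ≤ c * Real.exp (-Real.pi * s) := by
          rw [sub_zero]
          have h1' : Complex.abs ((u ((s:ℂ) + (t:ℂ) * Complex.I) j)^2)
              ≤ c * Real.exp (-Real.pi * s) := by simpa using h1
          rwa [map_pow] at h1'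
        have hXpos : (0:ℝ) < Real.exp (-(Real.pi/2) * s) := Real.exp_pos _
        have hX2 : Real.exp (-Real.pi * s) = (Real.exp (-(Real.pi/2) * s))^2 := by
          rw [pow_two, ← Real.exp_add]
          congr 1
          ring
        calc Complex.abs (u ((s:ℂ) + (t:ℂ) * Complex.I) j - 0)
            = Real.sqrt ((Complex.abs (u ((s:ℂ) + (t:ℂ) * Complex.I) j - 0))^2) :=
              (Real.sqrt_sq (Complex.abs.nonneg _)).symm
          _ ≤ Real.sqrt (c * Real.exp (-Real.pi * s)) := Real.sqrt_le_sqrt h2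
          _ = Real.sqrt c * Real.exp (-(Real.pi/2) * s) := by
              rw [hX2, Real.sqrt_mul hc.le, Real.sqrt_sq hXpos.le]
      · -- limit component nonzero
        have hbpos : 0 < Complex.abs (p j) := Complex.abs.pos hb0
        obtain ⟨s₂, hs₂⟩ := hconv (Complex.abs (p j)) hbpos
        set s₃ : ℝ := max s₂ 0 with hs₃
        set C : ℝ := max (c / Complex.abs (p j)) (B * Real.exp ((Real.pi/2) * s₃)) with hC
        have hCpos : 0 < C := lt_of_lt_of_le (by positivity) (le_max_left _ _)
        refine ⟨C, hCpos, fun s hs t ht => ?_⟩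
        set a : ℂ := u ((s:ℂ) + (t:ℂ) * Complex.I) j with ha
        set b : ℂ := p j with hb
        rcases le_or_gt s₃ s with hcase | hcase
        · -- large s
          have hab : Complex.abs (a - b) ≤ Complex.abs b := by
            calc Complex.abs (a - b) ≤ ‖u ((s:ℂ) + (t:ℂ) * Complex.I) - p‖ := by
                  rw [ha, hb, hcompdiff]; exact hpn _ j
              _ ≤ Complex.abs b := hs₂ s (le_trans (le_max_left _ _) hcase) t ht
          have hsumlb : Complex.abs b ≤ Complex.abs (a + b) := by
            have h2b : (2:ℂ) * b = (a + b) - (a - b) := by ring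
            have h2babs : Complex.abs ((2:ℂ) * b) = 2 * Complex.abs b := by
              rw [map_mul]; simp
            have h3 : Complex.abs ((a+b) - (a-b)) ≤ Complex.abs (a+b) + Complex.abs (a-b) := by
              have h4 := Complex.abs.add_le (a+b) (-(a-b))
              rwa [← sub_eq_add_neg, Complex.abs.map_neg] at h4
            rw [← h2b, h2babs] at h3
            linarith
          have hprod := hdecay s hs t ht
          rw [sq_sub_sq, map_mul] at hprod
          have key : Complex.abs (a - b) * Complex.abs b ≤ c * Real.exp (-Real.pi * s) := by
            calc Complex.abs (a - b) * Complex.abs b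
                ≤ Complex.abs (a - b) * Complex.abs (a + b) := by
                  apply mul_le_mul_of_nonneg_left hsumlb (Complex.abs.nonneg _)
              _ = Complex.abs (a + b) * Complex.abs (a - b) := by ring
              _ ≤ c * Real.exp (-Real.pi * s) := hprod
          have h4 : Complex.abs (a - b) ≤ (c / Complex.abs b) * Real.exp (-Real.pi * s) := by
            rw [div_mul_eq_mul_div, le_div_iff₀ hbpos]
            linarith
          calc Complex.abs (a - b) ≤ (c / Complex.abs b) * Real.exp (-Real.pi * s) := h4
            _ ≤ (c / Complex.abs b) * Real.exp (-(Real.pi/2) * s) := by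
                have h5 := hexp_half s hs
                have h6 : 0 < c / Complex.abs b := by positivity
                nlinarith
            _ ≤ C * Real.exp (-(Real.pi/2) * s) := by
                apply mul_le_mul_of_nonneg_right (le_max_left _ _) (Real.exp_pos _).le
        · -- small s
          have hab : Complex.abs (a - b) ≤ B := by
            calc Complex.abs (a - b) ≤ ‖u ((s:ℂ) + (t:ℂ) * Complex.I) - p‖ := by
                  rw [ha, hb, hcompdiff]; exact hpn _ j
              _ ≤ B := hB _ ⟨by simpa using hs, by simpa using ht.1, by simpa using ht.2⟩
          have hBle : B ≤ B * Real.exp ((Real.pi/2) * s₃) * Real.exp (-(Real.pi/2) * s) := by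
            rw [mul_assoc, ← Real.exp_add]
            have h7 : 0 ≤ (Real.pi/2) * s₃ + -(Real.pi/2) * s := by nlinarith
            have h8 := Real.one_le_exp h7
            nlinarith
          calc Complex.abs (a - b) ≤ B := hab
            _ ≤ B * Real.exp ((Real.pi/2) * s₃) * Real.exp (-(Real.pi/2) * s) := hBle
            _ ≤ C * Real.exp (-(Real.pi/2) * s) := by
                apply mul_le_mul_of_nonneg_right (le_max_right _ _) (Real.exp_pos _).le
  -- assemble the vector bound
  choose C hCpos hCbd using hcomp
  set c : ℝ := Real.sqrt (∑ j : Fin n, (C j)^2) + 1 with hc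
  have hcpos : 0 < c := by positivity
  refine ⟨c, hcpos, Real.pi/2, by positivity, fun s hs t ht => ?_⟩
  set E : ℝ := Real.exp (-(Real.pi/2) * s) with hE
  have hEpos : 0 < E := Real.exp_pos _
  have hnorm : ‖u ((s:ℂ) + (t:ℂ) * Complex.I) - p‖ ≤ Real.sqrt (∑ j : Fin n, (C j)^2) * E := by
    rw [EuclideanSpace.norm_eq]
    have hsum : (∑ j : Fin n, ‖(u ((s:ℂ) + (t:ℂ) * Complex.I) - p) j‖^2)
        ≤ ∑ j : Fin n, (C j)^2 * E^2 := by
      apply Finset.sum_le_sum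
      intro j _
      have h1 : ‖(u ((s:ℂ) + (t:ℂ) * Complex.I) - p) j‖ ≤ C j * E := by
        rw [← hcompdiff]
        exact hCbd j s hs t ht
      calc ‖(u ((s:ℂ) + (t:ℂ) * Complex.I) - p) j‖^2 ≤ (C j * E)^2 := by
            apply pow_le_pow_left₀ (norm_nonneg _) h1
        _ = (C j)^2 * E^2 := by ring
    calc Real.sqrt (∑ j : Fin n, ‖(u ((s:ℂ) + (t:ℂ) * Complex.I) - p) j‖^2)
        ≤ Real.sqrt (∑ j : Fin n, (C j)^2 * E^2) := Real.sqrt_le_sqrt hsum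
      _ = Real.sqrt ((∑ j : Fin n, (C j)^2) * E^2) := by rw [← Finset.sum_mul]
      _ = Real.sqrt (∑ j : Fin n, (C j)^2) * E := by
          rw [Real.sqrt_mul (Finset.sum_nonneg fun j _ => sq_nonneg _), Real.sqrt_sq hEpos.le]
  have hfinal : -(Real.pi/2) * s = -(Real.pi/2) * s := rfl
  calc ‖u ((s:ℂ) + (t:ℂ) * Complex.I) - p‖ ≤ Real.sqrt (∑ j : Fin n, (C j)^2) * E := hnorm
    _ ≤ c * E := by
        apply mul_le_mul_of_nonneg_right _ hEpos.le
        rw [hc]; linarith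
    _ = c * Real.exp (-(Real.pi/2) * s) := rfl
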